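/- arXiv:1302.4249 — 2 statements merged into one kernel-verified Lean document; each statement's English description precedes it below -/
import Mathlib

section
/- Wilson's rank formula consequence for trivial kernel: let p be prime, t ≤ min(k, v-k), with base-p digits of t and k satisfying k_j = t_j for all j < t(p) and k_{t(p)} ≥ t_{t(p)}. Then the kernel of the transpose of the inclusion matrix W_{t,k} over the field ℤ/pℤ is {0}. -/
open Matrix

section Aux

/-- The `i`-th base-`b` digit of `n` equals `n / b ^ i % b`. -/
private lemma digits_getD_eq (b : ℕ) (hb : 1 < b) : ∀ (i n : ℕ),
    (Nat.digits b n).getD i 0 = n / b ^ i % b := by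
  intro i
  induction i with
  | zero =>
    intro n
    rcases Nat.eq_zero_or_pos n with rfl | hn
    · simp
    · rw [Nat.digits_def' hb hn]
      simp
  | succ i ih =>
    intro n
    rcases Nat.eq_zero_or_pos n with rfl | hn
    · simp
    · rw [Nat.digits_def' hb hn]
      simp only [List.getD_cons_succ]
      rw [ih (n / b), Nat.div_div_eq_div_mul, ← pow_succ']

private lemma mod_pow_succ' (p : ℕ) (hp : 0 < p) (a i : ℕ) :
    a % p ^ (i + 1) = p ^ i * (a / p ^ i % p) + a % p ^ i := by
  conv_lhs => rw [← Nat.div_add_mod a (p ^ i), ← Nat.div_add_mod (a / p ^ i) p]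
  rw [pow_succ, Nat.mul_add, ← Nat.mul_assoc, Nat.add_assoc, Nat.mul_add_mod,
    Nat.mod_eq_of_lt]
  have h1 : a / p ^ i % p < p := Nat.mod_lt _ hp
  have h2 : a % p ^ i < p ^ i := Nat.mod_lt _ (pow_pos hp _)
  calc p ^ i * (a / p ^ i % p) + a % p ^ i < p ^ i * (a / p ^ i % p) + p ^ i := by omega
    _ = p ^ i * (a / p ^ i % p + 1) := by ring
    _ ≤ p ^ i * p := Nat.mul_le_mul_left _ (by omega)

private lemma mod_pow_eq_of_digits_eq (p : ℕ) (hp : 0 < p) (a b : ℕ) :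
    ∀ i, (∀ j < i, a / p ^ j % p = b / p ^ j % p) → a % p ^ i = b % p ^ i := by
  intro i
  induction i with
  | zero => simp [Nat.mod_one]
  | succ i ih =>
    intro h
    rw [mod_pow_succ' p hp, mod_pow_succ' p hp, ih (fun j hj => h j (by omega)), h i (by omega)]

/-- There are no carries when adding `t - s` and `k - t` in base `p`. -/
private lemma no_carries (p t k : ℕ) (hp : p.Prime) (htk : t ≤ k)
    (hlow : ∀ j < Nat.log p t, k / p ^ j % p = t / p ^ j % p)
    (hlead : t / p ^ Nat.log p t % p ≤ k / p ^ Nat.log p t % p)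
    (s : ℕ) (hs : s ≤ t) (i : ℕ) :
    (t - s) % p ^ i + (k - t) % p ^ i < p ^ i := by
  have hp1 : 1 < p := hp.one_lt
  have hpi : 0 < p ^ i := pow_pos hp.pos _
  rcases Nat.eq_zero_or_pos t with rfl | ht
  · have hs0 : s = 0 := Nat.le_zero.mp hs
    subst hs0
    have := Nat.mod_lt (k - 0) hpi
    simpa using this
  set L := Nat.log p t with hL
  have hpL : 0 < p ^ L := pow_pos hp.pos _
  have hmodL : k % p ^ L = t % p ^ L := mod_pow_eq_of_digits_eq p hp.pos k t L hlow
  by_cases hi : i ≤ L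
  · have hdvd : p ^ L ∣ k - t := (Nat.modEq_iff_dvd' htk).mp hmodL.symm
    have hdvd2 : p ^ i ∣ k - t := dvd_trans (pow_dvd_pow p hi) hdvd
    have h0 : (k - t) % p ^ i = 0 := by
      obtain ⟨m, hm⟩ := hdvd2; simp [hm, Nat.mul_mod_right]
    rw [h0, Nat.add_zero]
    exact Nat.mod_lt _ hpi
  · push_neg at hi
    have hLi : L + 1 ≤ i := hi
    have htlt : t < p ^ (L + 1) := Nat.lt_pow_succ_log_self hp1 t
    set tL := t / p ^ L % p with htLdef
    set kL := k / p ^ L % p with hkLdef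
    have hkLp : kL < p := Nat.mod_lt _ hp.pos
    set q := p ^ (L + 1) with hq
    have hq0 : 0 < q := pow_pos hp.pos _
    have hkq : k % q = p ^ L * kL + t % p ^ L := by
      rw [hq, mod_pow_succ' p hp.pos, hmodL]
    have htq : t % q = p ^ L * tL + t % p ^ L := by
      rw [hq, mod_pow_succ' p hp.pos]
    have htmodlt : t % p ^ L < p ^ L := Nat.mod_lt _ hpL
    have hmulle : p ^ L * tL ≤ p ^ L * kL := Nat.mul_le_mul_left _ hlead
    have hmle : t % q ≤ k % q := by omega
    set e := kL - tL with hedef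
    have he : kL = tL + e := by omega
    have hktq : (k - t) % q = p ^ L * e := by
      have hdivle : t / q ≤ k / q := Nat.div_le_div_right htk
      set C := k / q - t / q with hC
      have hCC : k / q = t / q + C := by omega
      have hexp : k = q * (t / q) + q * C + k % q := by
        calc k = q * (k / q) + k % q := (Nat.div_add_mod k q).symm
          _ = q * (t / q) + q * C + k % q := by rw [hCC, Nat.mul_add]
      have hexp2 : t = q * (t / q) + t % q := (Nat.div_add_mod t q).symm
      have hsub : k - t = q * C + (k % q - t % q) := by omega
      have hdiff : k % q - t % q = p ^ L * e := by
        have : p ^ L * kL = p ^ L * tL + p ^ L * e := by rw [he, Nat.mul_add]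
        omega
      have helt : p ^ L * e < q := by
        rw [hq, pow_succ]
        exact mul_lt_mul_of_pos_left (by omega) hpL
      rw [hsub, hdiff, Nat.mul_add_mod, Nat.mod_eq_of_lt helt]
    set c := (k - t) % p ^ i with hc
    have hcq : c % q = p ^ L * e := by
      rw [hc, Nat.mod_mod_of_dvd _ (pow_dvd_pow p hLi), hktq]
    set d := c / q with hd
    have hcd : c = q * d + p ^ L * e := by
      rw [hd]
      have h1 := Nat.div_add_mod c q
      omega
    have hclt : c < p ^ i := Nat.mod_lt _ hpi
    have hpi_eq : p ^ i = q * p ^ (i - (L + 1)) := by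
      rw [hq, ← pow_add]
      congr 1
      omega
    have hdlt : d < p ^ (i - (L + 1)) := by
      rw [hd]
      apply Nat.div_lt_of_lt_mul
      rw [← hpi_eq]
      exact hclt
    have hqd : q * (d + 1) ≤ p ^ i := by
      rw [hpi_eq]
      exact Nat.mul_le_mul_left _ (by omega)
    have htub : t < p ^ L * (tL + 1) := by
      have h1 : t % q = t := Nat.mod_eq_of_lt htlt
      have h2 : p ^ L * (tL + 1) = p ^ L * tL + p ^ L := by ring
      omega
    have hfin1 : p ^ L * (tL + 1) + p ^ L * e = p ^ L * (kL + 1) := by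
      rw [he]; ring
    have hfin2 : p ^ L * (kL + 1) ≤ q := by
      rw [hq, pow_succ]
      exact Nat.mul_le_mul_left _ (by omega)
    have hamod : (t - s) % p ^ i = t - s := by
      apply Nat.mod_eq_of_lt
      have hqle : q ≤ p ^ i := by
        calc q = q * 1 := by ring
          _ ≤ q * p ^ (i - (L + 1)) := Nat.mul_le_mul_left _ (pow_pos hp.pos _)
          _ = p ^ i := hpi_eq.symm
      omega
    rw [hamod]
    calc t - s + c ≤ t + c := by omega
      _ < p ^ L * (tL + 1) + c := by omega
      _ = p ^ L * (tL + 1) + (q * d + p ^ L * e) := by rw [hcd]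
      _ = p ^ L * (kL + 1) + q * d := by rw [← hfin1]; ring
      _ ≤ q + q * d := Nat.add_le_add_right hfin2 _
      _ = q * (d + 1) := by ring
      _ ≤ p ^ i := hqd

private lemma choose_not_dvd (p t k : ℕ) (hp : p.Prime) (htk : t ≤ k)
    (hlow : ∀ j < Nat.log p t, k / p ^ j % p = t / p ^ j % p)
    (hlead : t / p ^ Nat.log p t % p ≤ k / p ^ Nat.log p t % p)
    (s : ℕ) (hs : s ≤ t) :
    ¬ p ∣ (k - s).choose (t - s) := by
  rw [← emultiplicity_eq_zero]
  have hkn : t - s ≤ k - s := by omega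
  rw [hp.emultiplicity_choose hkn (Nat.lt_succ_self (Nat.log p (k - s)))]
  have hempty : ({i ∈ Finset.Ico 1 (Nat.log p (k - s) + 1) |
      p ^ i ≤ (t - s) % p ^ i + (k - s - (t - s)) % p ^ i} : Finset ℕ) = ∅ := by
    rw [Finset.filter_eq_empty_iff]
    intro i _
    have hkts : k - s - (t - s) = k - t := by omega
    rw [hkts]
    exact Nat.not_le.mpr (no_carries p t k hp htk hlow hlead s hs i)
  rw [hempty]
  simp

variable {α : Type*} [DecidableEq α]

/-- The number of `k`-subsets of `Y` containing a fixed subset `T`. -/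
private lemma card_supersets (Y T : Finset α) (k : ℕ) (hTY : T ⊆ Y) (hTk : T.card ≤ k) :
    ({K ∈ Y.powersetCard k | T ⊆ K} : Finset (Finset α)).card
      = (Y.card - T.card).choose (k - T.card) := by
  rw [← Finset.card_sdiff_of_subset hTY, ← Finset.card_powersetCard]
  apply Finset.card_bij' (fun K _ => K \ T) (fun A _ => A ∪ T)
  · intro K hK
    rw [Finset.mem_filter, Finset.mem_powersetCard] at hK
    obtain ⟨⟨hKY, hKc⟩, hTK⟩ := hK
    rw [Finset.mem_powersetCard]
    exact ⟨Finset.sdiff_subset_sdiff hKY (le_refl T), by rw [Finset.card_sdiff_of_subset hTK, hKc]⟩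
  · intro A hA
    rw [Finset.mem_powersetCard] at hA
    obtain ⟨hAY, hAc⟩ := hA
    rw [Finset.subset_sdiff] at hAY
    obtain ⟨hAY, hAT⟩ := hAY
    rw [Finset.mem_filter, Finset.mem_powersetCard]
    refine ⟨⟨Finset.union_subset hAY hTY, ?_⟩, Finset.subset_union_right⟩
    rw [Finset.card_union_of_disjoint hAT, hAc]
    omega
  · intro K hK
    rw [Finset.mem_filter] at hK
    exact Finset.sdiff_union_of_subset hK.2
  · intro A hA
    rw [Finset.mem_powersetCard, Finset.subset_sdiff] at hA
    exact Finset.union_sdiff_cancel_right hA.1.2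

private lemma step1 {p : ℕ} [Fact p.Prime] (t k : ℕ) (htk : t ≤ k)
    (V : Finset α) (f : Finset α → ZMod p)
    (hf : ∀ K ∈ V.powersetCard k, ∑ T ∈ K.powersetCard t, f T = 0)
    (Y : Finset α) (hYV : Y ⊆ V)
    (hch : ((Y.card - t).choose (k - t) : ZMod p) ≠ 0) :
    ∑ T ∈ Y.powersetCard t, f T = 0 := by
  have h0 : ∑ K ∈ Y.powersetCard k, ∑ T ∈ K.powersetCard t, f T = 0 := by
    apply Finset.sum_eq_zero
    intro K hK
    apply hf
    rw [Finset.mem_powersetCard] at hK ⊢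
    exact ⟨hK.1.trans hYV, hK.2⟩
  rw [Finset.sum_comm' (t' := Y.powersetCard t)
    (s' := fun T => {K ∈ Y.powersetCard k | T ⊆ K})
    (by
      intro K T
      simp only [Finset.mem_powersetCard, Finset.mem_filter]
      constructor
      · rintro ⟨⟨hKY, hKc⟩, hTK, hTc⟩
        exact ⟨⟨⟨hKY, hKc⟩, hTK⟩, hTK.trans hKY, hTc⟩
      · rintro ⟨⟨⟨hKY, hKc⟩, hTK⟩, hTY, hTc⟩
        exact ⟨⟨hKY, hKc⟩, hTK, hTc⟩)] at h0
  have h1 : ∀ T ∈ Y.powersetCard t,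
      (∑ _K ∈ ({K ∈ Y.powersetCard k | T ⊆ K} : Finset (Finset α)), f T)
      = ((Y.card - t).choose (k - t) : ZMod p) * f T := by
    intro T hT
    rw [Finset.mem_powersetCard] at hT
    rw [Finset.sum_const, card_supersets Y T k hT.1 (hT.2 ▸ htk), hT.2, nsmul_eq_mul]
  rw [Finset.sum_congr rfl h1, ← Finset.mul_sum] at h0
  rcases mul_eq_zero.mp h0 with h | h
  · exact absurd h hch
  · exact h

private lemma alt_sum {p : ℕ} (s : Finset α) :
    ∑ R ∈ s.powerset, (-1 : ZMod p) ^ R.card = if s = ∅ then 1 else 0 := by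
  have h := Finset.sum_powerset_neg_one_pow_card (x := s)
  have h2 : ((∑ R ∈ s.powerset, (-1 : ℤ) ^ R.card : ℤ) : ZMod p)
      = ∑ R ∈ s.powerset, (-1 : ZMod p) ^ R.card := by push_cast; rfl
  rw [← h2, h]
  split_ifs <;> simp

private lemma ie1 {p : ℕ} (S : Finset α) (P : Finset (Finset α)) (g : Finset α → ZMod p) :
    ∑ R ∈ S.powerset, (-1 : ZMod p) ^ R.card *
        ∑ T ∈ ({T ∈ P | Disjoint T R} : Finset (Finset α)), g T
      = ∑ T ∈ ({T ∈ P | S ⊆ T} : Finset (Finset α)), g T := by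
  simp_rw [Finset.sum_filter, Finset.mul_sum]
  rw [Finset.sum_comm]
  apply Finset.sum_congr rfl
  intro T _
  calc ∑ R ∈ S.powerset, (-1 : ZMod p) ^ R.card * (if Disjoint T R then g T else 0)
      = ∑ R ∈ S.powerset, (if Disjoint T R then (-1 : ZMod p) ^ R.card else 0) * g T := by
        apply Finset.sum_congr rfl
        intro R _
        split_ifs <;> ring
    _ = (∑ R ∈ S.powerset, if Disjoint T R then (-1 : ZMod p) ^ R.card else 0) * g T := by
        rw [Finset.sum_mul]
    _ = (∑ R ∈ (S \ T).powerset, (-1 : ZMod p) ^ R.card) * g T := by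
        congr 1
        rw [← Finset.sum_filter]
        apply Finset.sum_congr _ (fun _ _ => rfl)
        ext R
        simp only [Finset.mem_filter, Finset.mem_powerset, Finset.subset_sdiff]
        rw [disjoint_comm]
    _ = (if S \ T = ∅ then 1 else 0) * g T := by rw [alt_sum]
    _ = if S ⊆ T then g T else 0 := by
        simp only [Finset.sdiff_eq_empty_iff_subset]
        split_ifs <;> ring

private lemma ie2 {p : ℕ} (S₀ : Finset α) (P : Finset (Finset α)) (g : Finset α → ZMod p) :
    ∑ S ∈ S₀.powerset, (-1 : ZMod p) ^ S.card *
        ∑ T ∈ ({T ∈ P | S ⊆ T} : Finset (Finset α)), g T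
      = ∑ T ∈ ({T ∈ P | S₀ ∩ T = ∅} : Finset (Finset α)), g T := by
  simp_rw [Finset.sum_filter, Finset.mul_sum]
  rw [Finset.sum_comm]
  apply Finset.sum_congr rfl
  intro T _
  calc ∑ S ∈ S₀.powerset, (-1 : ZMod p) ^ S.card * (if S ⊆ T then g T else 0)
      = ∑ S ∈ S₀.powerset, (if S ⊆ T then (-1 : ZMod p) ^ S.card else 0) * g T := by
        apply Finset.sum_congr rfl
        intro S _
        split_ifs <;> ring
    _ = (∑ S ∈ S₀.powerset, if S ⊆ T then (-1 : ZMod p) ^ S.card else 0) * g T := by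
        rw [Finset.sum_mul]
    _ = (∑ S ∈ (S₀ ∩ T).powerset, (-1 : ZMod p) ^ S.card) * g T := by
        congr 1
        rw [← Finset.sum_filter]
        apply Finset.sum_congr _ (fun _ _ => rfl)
        ext S
        simp only [Finset.mem_filter, Finset.mem_powerset, Finset.subset_inter_iff]
    _ = (if S₀ ∩ T = ∅ then 1 else 0) * g T := by rw [alt_sum]
    _ = if S₀ ∩ T = ∅ then g T else 0 := by split_ifs <;> ring

end Aux

/-- If the base-`p` digits of `k` agree with those of `t` below the leading digit of `t`
and the leading-position digit of `k` is at least that of `t`, then the kernel of the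
transpose of the inclusion matrix `W_{t,k}` over `ℤ/pℤ` is trivial. -/
theorem inclusion_matrix_kernel_trivial_mod_p {α : Type*} [DecidableEq α]
    (V : Finset α) (p t k : ℕ) (hp : p.Prime)
    (htk : t ≤ k) (htv : t + k ≤ V.card)
    (hlow : ∀ j < Nat.log p t, (Nat.digits p k).getD j 0 = (Nat.digits p t).getD j 0)
    (hlead : (Nat.digits p t).getD (Nat.log p t) 0 ≤ (Nat.digits p k).getD (Nat.log p t) 0)
    (x : ↥(V.powersetCard t) → ZMod p)
    (hx : Matrix.vecMul x (Matrix.of (fun (T : ↥(V.powersetCard t)) (K : ↥(V.powersetCard k)) =>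
      if (T : Finset α) ⊆ (K : Finset α) then (1 : ZMod p) else 0)) = 0) :
    x = 0 := by
  haveI : Fact p.Prime := ⟨hp⟩
  have hp1 : 1 < p := hp.one_lt
  have hlow' : ∀ j < Nat.log p t, k / p ^ j % p = t / p ^ j % p := by
    intro j hj
    have := hlow j hj
    rwa [digits_getD_eq p hp1 j k, digits_getD_eq p hp1 j t] at this
  have hlead' : t / p ^ Nat.log p t % p ≤ k / p ^ Nat.log p t % p := by
    have := hlead
    rwa [digits_getD_eq p hp1 _ k, digits_getD_eq p hp1 _ t] at this
  have hch : ∀ s ≤ t, ((k - s).choose (t - s) : ZMod p) ≠ 0 := by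
    intro s hs h0
    exact choose_not_dvd p t k hp htk hlow' hlead' s hs
      ((ZMod.natCast_eq_zero_iff _ p).mp h0)
  set f : Finset α → ZMod p :=
    fun T => if h : T ∈ V.powersetCard t then x ⟨T, h⟩ else 0 with hfdef
  -- rewrite the kernel hypothesis
  have hsum : ∀ K ∈ V.powersetCard k, ∑ T ∈ K.powersetCard t, f T = 0 := by
    intro K hK
    have h1 := congrFun hx ⟨K, hK⟩
    simp only [Matrix.vecMul, dotProduct, Matrix.of_apply, Pi.zero_apply] at h1
    rw [Finset.univ_eq_attach] at h1
    have h2 : ∑ T ∈ (V.powersetCard t).attach,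
          (x T * if (T : Finset α) ⊆ K then (1 : ZMod p) else 0)
        = ∑ T ∈ V.powersetCard t, f T * (if T ⊆ K then 1 else 0) := by
      rw [← Finset.sum_attach (V.powersetCard t)
        (fun T => f T * (if T ⊆ K then (1 : ZMod p) else 0))]
      apply Finset.sum_congr rfl
      intro T _
      simp only [hfdef]
      rw [dif_pos T.prop]
    rw [h2] at h1
    have h3 : (V.powersetCard t).filter (fun T => T ⊆ K) = K.powersetCard t := by
      rw [Finset.mem_powersetCard] at hK
      ext T
      simp only [Finset.mem_filter, Finset.mem_powersetCard]
      constructor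
      · rintro ⟨⟨_, hc⟩, hTK⟩; exact ⟨hTK, hc⟩
      · rintro ⟨hTK, hc⟩; exact ⟨⟨hTK.trans hK.1, hc⟩, hTK⟩
    calc ∑ T ∈ K.powersetCard t, f T
        = ∑ T ∈ (V.powersetCard t).filter (fun T => T ⊆ K), f T := by rw [h3]
      _ = ∑ T ∈ V.powersetCard t, if T ⊆ K then f T else 0 := Finset.sum_filter _ _
      _ = ∑ T ∈ V.powersetCard t, f T * (if T ⊆ K then 1 else 0) := by
          apply Finset.sum_congr rfl
          intro T _
          split_ifs <;> ring
      _ = 0 := h1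
  -- all "large" sums vanish
  have hw : ∀ Y, Y ⊆ V → k ≤ Y.card → Y.card ≤ t + k →
      ∑ T ∈ Y.powersetCard t, f T = 0 := by
    intro Y hYV hk1 hk2
    apply step1 t k htk V f hsum Y hYV
    have hs : t + k - Y.card ≤ t := by omega
    have he1 : Y.card - t = k - (t + k - Y.card) := by omega
    have he2 : k - t = (k - (t + k - Y.card)) - (t - (t + k - Y.card)) := by omega
    rw [he1, he2, Nat.choose_symm (by omega)]
    exact hch _ hs
  -- conclude
  funext B
  obtain ⟨V₀, hBV₀, hV₀V, hV₀c⟩ := Finset.exists_subsuperset_card_eq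
    (Finset.mem_powersetCard.mp B.prop).1
    (le_trans (le_of_eq (Finset.mem_powersetCard.mp B.prop).2) (Nat.le_add_right t k)) htv
  have hu : ∀ S ⊆ V₀ \ (B : Finset α),
      ∑ T ∈ ({T ∈ V₀.powersetCard t | S ⊆ T} : Finset (Finset α)), f T = 0 := by
    intro S hS
    by_cases hSc : S.card ≤ t
    · rw [← ie1 S (V₀.powersetCard t) f]
      apply Finset.sum_eq_zero
      intro R hR
      rw [Finset.mem_powerset] at hR
      have hRV₀ : R ⊆ V₀ := hR.trans (hS.trans (Finset.sdiff_subset))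
      have hPt : ({T ∈ V₀.powersetCard t | Disjoint T R} : Finset (Finset α))
          = (V₀ \ R).powersetCard t := by
        ext T
        simp only [Finset.mem_filter, Finset.mem_powersetCard, Finset.subset_sdiff]
        tauto
      rw [hPt, hw (V₀ \ R) ((Finset.sdiff_subset).trans hV₀V) ?_ ?_, mul_zero]
      · rw [Finset.card_sdiff_of_subset hRV₀, hV₀c]
        have := Finset.card_le_card hR
        omega
      · rw [Finset.card_sdiff_of_subset hRV₀, hV₀c]
        omega
    · apply Finset.sum_eq_zero
      intro T hT
      rw [Finset.mem_filter, Finset.mem_powersetCard] at hT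
      have := Finset.card_le_card hT.2
      omega
  have hfB : f (B : Finset α) = 0 := by
    have hkey := ie2 (V₀ \ (B : Finset α)) (V₀.powersetCard t) f
    have hzero : ∑ S ∈ (V₀ \ (B : Finset α)).powerset, (-1 : ZMod p) ^ S.card *
        ∑ T ∈ ({T ∈ V₀.powersetCard t | S ⊆ T} : Finset (Finset α)), f T = 0 := by
      apply Finset.sum_eq_zero
      intro S hS
      rw [hu S (Finset.mem_powerset.mp hS), mul_zero]
    have hsingle : ({T ∈ V₀.powersetCard t | (V₀ \ (B : Finset α)) ∩ T = ∅} : Finset (Finset α))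
        = {(B : Finset α)} := by
      ext T
      simp only [Finset.mem_filter, Finset.mem_powersetCard, Finset.mem_singleton]
      constructor
      · rintro ⟨⟨hTV₀, hTc⟩, hint⟩
        have hTB : T ⊆ (B : Finset α) := by
          intro a ha
          by_contra hab
          have hmem : a ∈ (V₀ \ (B : Finset α)) ∩ T :=
            Finset.mem_inter.mpr ⟨Finset.mem_sdiff.mpr ⟨hTV₀ ha, hab⟩, ha⟩
          rw [hint] at hmem
          exact absurd hmem (Finset.notMem_empty a)
        exact Finset.eq_of_subset_of_card_le hTB
          (by rw [hTc, (Finset.mem_powersetCard.mp B.prop).2])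
      · rintro rfl
        exact ⟨⟨hBV₀, (Finset.mem_powersetCard.mp B.prop).2⟩, Finset.sdiff_inter_self _ _⟩
    rw [hsingle, Finset.sum_singleton, hzero] at hkey
    exact hkey.symm
  have hfx : f (B : Finset α) = x B := by
    simp only [hfdef]
    rw [dif_pos B.prop]
  show x B = 0
  rw [← hfx]
  exact hfB
end

section
/- Let k be an integer with 2 ≤ k ≤ v-2 and k ≡ 0 (mod 4). Let G and G' be graphs on the same finite vertex set V of size v such that for all k-element subsets K of V, e(G|_K) and e(G'|_K) have the same parity. Then G' = G or G' is the complement of G. -/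
/-- Number of edges of the induced subgraph of `G` on a subset `K`. -/
def edgeCountOn {V : Type*} [Fintype V] [DecidableEq V] (G : SimpleGraph V)
    [DecidableRel G.Adj] (K : Finset V) : ℕ :=
  (G.edgeFinset.filter (· ∈ K.sym2)).card

lemma edgeCountOn_insert {V : Type*} [Fintype V] [DecidableEq V] (G : SimpleGraph V)
    [DecidableRel G.Adj] {T : Finset V} {a : V} (ha : a ∉ T) :
    edgeCountOn G (insert a T) = edgeCountOn G T + (T.filter (G.Adj a)).card := by
  classical
  have hsplit := Finset.card_filter_add_card_filter_not
    (s := G.edgeFinset.filter (· ∈ (insert a T).sym2)) (p := fun e => e ∈ T.sym2)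
  have h1 : (G.edgeFinset.filter (· ∈ (insert a T).sym2)).filter (fun e => e ∈ T.sym2)
      = G.edgeFinset.filter (· ∈ T.sym2) := by
    rw [Finset.filter_filter]
    refine Finset.filter_congr ?_
    intro e _
    simpa using and_iff_right_of_imp
      (fun h => Finset.sym2_mono (Finset.subset_insert a T) h)
  have h2 : ((G.edgeFinset.filter (· ∈ (insert a T).sym2)).filter (fun e => ¬ e ∈ T.sym2)).card
      = (T.filter (G.Adj a)).card := by
    rw [Finset.filter_filter]
    symm
    apply Finset.card_bij (fun y _ => s(a, y))
    · intro y hy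
      simp only [Finset.mem_filter] at hy ⊢
      obtain ⟨hyT, hadj⟩ := hy
      refine ⟨?_, ⟨?_, ?_⟩⟩
      · rw [SimpleGraph.mem_edgeFinset]; exact hadj
      · rw [Finset.mk_mem_sym2_iff]
        exact ⟨Finset.mem_insert_self a T, Finset.mem_insert_of_mem hyT⟩
      · rw [Finset.mk_mem_sym2_iff]
        rintro ⟨haT, -⟩
        exact ha haT
    · intro y1 h1 y2 h2 heq
      rw [Sym2.eq_iff] at heq
      rcases heq with ⟨-, h⟩ | ⟨h', h''⟩
      · exact h
      · exact absurd ((h' ▸ (Finset.mem_filter.mp h2).1)) ha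
    · intro e he
      induction e using Sym2.ind with
      | _ x y =>
        simp only [Finset.mem_filter, SimpleGraph.mem_edgeFinset, SimpleGraph.mem_edgeSet,
          Finset.mk_mem_sym2_iff] at he
        obtain ⟨hadj, ⟨hx, hy⟩, hnT⟩ := he
        rcases Finset.mem_insert.mp hx with rfl | hxT
        · rcases Finset.mem_insert.mp hy with rfl | hyT
          · exact absurd rfl hadj.ne
          · exact ⟨y, Finset.mem_filter.mpr ⟨hyT, hadj⟩, rfl⟩
        · rcases Finset.mem_insert.mp hy with rfl | hyT
          · exact ⟨x, Finset.mem_filter.mpr ⟨hxT, hadj.symm⟩, Sym2.eq_swap⟩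
          · exact absurd ⟨hxT, hyT⟩ hnT
  rw [h1, h2] at hsplit
  unfold edgeCountOn
  omega

/-- If `4 ∣ k`, `2 ≤ k ≤ v - 2`, and the edge counts of `G` and `G'` have the same
parity on all `k`-sets, then `G' = G` or `G'` is the complement of `G`. -/
theorem graphs_eq_or_compl_of_edgeCount_parity {V : Type*} [Fintype V] [DecidableEq V]
    (G G' : SimpleGraph V) [DecidableRel G.Adj] [DecidableRel G'.Adj]
    (k : ℕ) (hk2 : 2 ≤ k) (hkv : k + 2 ≤ Fintype.card V) (hk4 : k % 4 = 0)
    (h : ∀ K : Finset V, K.card = k → edgeCountOn G K % 2 = edgeCountOn G' K % 2) :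
    G' = G ∨ G' = Gᶜ := by
  classical
  set f : V → V → ZMod 2 :=
    fun x y => (if G.Adj x y then 1 else 0) + (if G'.Adj x y then 1 else 0) with hf
  have fsymm : ∀ x y, f x y = f y x := by
    intro x y
    simp only [hf, SimpleGraph.adj_comm]
  set ecm : Finset V → ZMod 2 :=
    fun K => (edgeCountOn G K : ZMod 2) + (edgeCountOn G' K : ZMod 2) with hecm
  -- the parity hypothesis in `ZMod 2` form
  have hzero : ∀ K : Finset V, K.card = k → ecm K = 0 := by
    intro K hK
    have hcast : ((edgeCountOn G K : ℕ) : ZMod 2) = ((edgeCountOn G' K : ℕ) : ZMod 2) := by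
      rw [← ZMod.natCast_mod (edgeCountOn G K) 2, ← ZMod.natCast_mod (edgeCountOn G' K) 2,
        h K hK]
    rw [hecm]
    simp only [hcast]
    exact CharTwo.add_self_eq_zero _
  -- effect of inserting a vertex
  have hins : ∀ (T : Finset V) (a : V), a ∉ T →
      ecm (insert a T) = ecm T + ∑ y ∈ T, f a y := by
    intro T a ha
    have cG := edgeCountOn_insert G (T := T) (a := a) ha
    have cG' := edgeCountOn_insert G' (T := T) (a := a) ha
    have hcardG : (((T.filter (G.Adj a)).card : ℕ) : ZMod 2)
        = ∑ y ∈ T, (if G.Adj a y then (1 : ZMod 2) else 0) := by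
      rw [Finset.card_filter]
      push_cast
      rfl
    have hcardG' : (((T.filter (G'.Adj a)).card : ℕ) : ZMod 2)
        = ∑ y ∈ T, (if G'.Adj a y then (1 : ZMod 2) else 0) := by
      rw [Finset.card_filter]
      push_cast
      rfl
    rw [hecm]
    simp only [cG, cG']
    push_cast
    rw [hcardG, hcardG', hf]
    rw [Finset.sum_add_distrib]
    ring
  -- Step 1: degrees into a `(k-1)`-set have equal parity for outside vertices
  have step1 : ∀ (T : Finset V) (a b : V), T.card = k - 1 → a ∉ T → b ∉ T →
      ∑ y ∈ T, f a y = ∑ y ∈ T, f b y := by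
    intro T a b hT haT hbT
    have ha0 := hzero (insert a T) (by rw [Finset.card_insert_of_notMem haT, hT]; omega)
    have hb0 := hzero (insert b T) (by rw [Finset.card_insert_of_notMem hbT, hT]; omega)
    rw [hins T a haT] at ha0
    rw [hins T b hbT] at hb0
    have key : ∀ (x y z : ZMod 2), x + y = 0 → x + z = 0 → y = z := by decide
    exact key _ _ _ ha0 hb0
  -- Step 2: a 4-point relation
  have step2 : ∀ x y c z : V, x ≠ y → x ≠ c → x ≠ z → y ≠ c → y ≠ z → c ≠ z →
      f x c + f y c = f x z + f y z := by
    intro x y c z hxy hxc hxz hyc hyz hcz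
    set U := ((Finset.univ.erase x).erase y).erase z with hU
    have hcU : c ∈ U := by
      simp only [hU, Finset.mem_erase, Finset.mem_univ, and_true]
      exact ⟨hcz, hyc.symm, hxc.symm⟩
    have hzU : z ∈ (Finset.univ.erase x).erase y := by
      simp only [Finset.mem_erase, Finset.mem_univ, and_true]
      exact ⟨hyz.symm, hxz.symm⟩
    have hyU : y ∈ Finset.univ.erase x := by
      simp only [Finset.mem_erase, Finset.mem_univ, and_true]
      exact hxy.symm
    have hUcard : U.card = Fintype.card V - 3 := by
      rw [hU, Finset.card_erase_of_mem hzU, Finset.card_erase_of_mem hyU,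
        Finset.card_erase_of_mem (Finset.mem_univ x), Finset.card_univ]
      omega
    obtain ⟨T, hcT, hTU, hTcard⟩ := Finset.exists_subsuperset_card_eq
      (s := {c}) (t := U) (n := k - 1)
      (Finset.singleton_subset_iff.mpr hcU) (by simp; omega) (by omega)
    have hcT' : c ∈ T := hcT (Finset.mem_singleton_self c)
    have hxT : x ∉ T := fun hx => by
      have := hTU hx; simp [hU, Finset.mem_erase] at this
    have hyT : y ∉ T := fun hy => by
      have := hTU hy; simp [hU, Finset.mem_erase] at this
    have hzT : z ∉ T := fun hz => by
      have := hTU hz; simp [hU, Finset.mem_erase] at this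
    have hzTe : z ∉ T.erase c := fun hh => hzT (Finset.mem_of_mem_erase hh)
    set T' := insert z (T.erase c) with hT'
    have hT'card : T'.card = k - 1 := by
      rw [hT', Finset.card_insert_of_notMem hzTe, Finset.card_erase_of_mem hcT', hTcard]
      omega
    have hxT' : x ∉ T' := by
      simp only [hT', Finset.mem_insert, Finset.mem_erase]
      push_neg
      exact ⟨hxz, fun _ => hxT⟩
    have hyT' : y ∉ T' := by
      simp only [hT', Finset.mem_insert, Finset.mem_erase]
      push_neg
      exact ⟨hyz, fun _ => hyT⟩
    have h1 := step1 T x y hTcard hxT hyT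
    have h2 := step1 T' x y hT'card hxT' hyT'
    rw [← Finset.add_sum_erase T (f x) hcT', ← Finset.add_sum_erase T (f y) hcT'] at h1
    rw [hT', Finset.sum_insert hzTe, Finset.sum_insert hzTe] at h2
    have key : ∀ (a b a' b' s1 s2 : ZMod 2),
        a + s1 = b + s2 → a' + s1 = b' + s2 → a + b = a' + b' := by decide
    exact key _ _ _ _ _ _ h1 h2
  -- Step 3: no vertex sees both a `1` and a `0`
  have step3 : ∀ a b c : V, a ≠ b → a ≠ c → b ≠ c → f a b = 1 → f a c = 0 → False := by
    intro a b c hab hac hbc h1v h0v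
    have haU : a ∈ (Finset.univ.erase b).erase c := by
      simp only [Finset.mem_erase, Finset.mem_univ, and_true]
      exact ⟨hac, hab⟩
    have hbU : b ∈ Finset.univ.erase b → False := fun hh => by
      simp [Finset.mem_erase] at hh
    have hUcard : ((Finset.univ.erase b).erase c).card = Fintype.card V - 2 := by
      rw [Finset.card_erase_of_mem, Finset.card_erase_of_mem (Finset.mem_univ b),
        Finset.card_univ]
      · omega
      · simp only [Finset.mem_erase, Finset.mem_univ, and_true]
        exact hbc.symm
    obtain ⟨T, haT, hTU, hTcard⟩ := Finset.exists_subsuperset_card_eq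
      (s := {a}) (t := (Finset.univ.erase b).erase c) (n := k - 1)
      (Finset.singleton_subset_iff.mpr haU) (by simp; omega) (by omega)
    have haT' : a ∈ T := haT (Finset.mem_singleton_self a)
    have hbT : b ∉ T := fun hb => by
      have := hTU hb; simp [Finset.mem_erase] at this
    have hcT : c ∉ T := fun hc => by
      have := hTU hc; simp [Finset.mem_erase] at this
    have key1 := step1 T b c hTcard hbT hcT
    have key2 : ∀ w ∈ T, f b w + f c w = 1 := by
      intro w hw
      by_cases hwa : w = a
      · subst hwa
        rw [fsymm b w, fsymm c w, h1v, h0v]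
        decide
      · have hwb : b ≠ w := fun hh => hbT (hh ▸ hw)
        have hwc : c ≠ w := fun hh => hcT (hh ▸ hw)
        have := step2 b c w a hbc hwb (Ne.symm hab) hwc (Ne.symm hac) hwa
        rw [this, fsymm b a, fsymm c a, h1v, h0v]
        decide
    have hsum : ∑ w ∈ T, (f b w + f c w) = ∑ w ∈ T, (1 : ZMod 2) :=
      Finset.sum_congr rfl key2
    rw [Finset.sum_add_distrib, key1, Finset.sum_const, hTcard] at hsum
    have hzero2 : (∑ y ∈ T, f c y) + (∑ y ∈ T, f c y) = 0 := CharTwo.add_self_eq_zero _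
    rw [hzero2] at hsum
    have hodd : (k - 1) % 2 = 1 := by omega
    have : ((k - 1 : ℕ) : ZMod 2) = 1 := by
      rw [← ZMod.natCast_mod, hodd]
      rfl
    rw [nsmul_eq_mul, mul_one, this] at hsum
    exact absurd hsum (by decide)
  -- shared-vertex equality
  have sh : ∀ a b d : V, a ≠ b → a ≠ d → f a b = f a d := by
    intro a b d hab had
    by_cases hbd : b = d
    · rw [hbd]
    · by_contra hne
      have h1 : ∀ u : ZMod 2, u = 0 ∨ u = 1 := by decide
      rcases h1 (f a b) with hb0 | hb1 <;> rcases h1 (f a d) with hd0 | hd1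
      · exact hne (hb0.trans hd0.symm)
      · exact step3 a d b had hab (Ne.symm hbd) hd1 hb0
      · exact step3 a b d hab had hbd hb1 hd0
      · exact hne (hb1.trans hd1.symm)
  -- all off-diagonal values of `f` are equal
  have key : ∀ a b c d : V, a ≠ b → c ≠ d → f a b = f c d := by
    intro a b c d hab hcd
    by_cases hac : a = c
    · subst hac
      exact sh a b d hab hcd
    · by_cases had : a = d
      · subst had
        rw [sh a b c hab hac]
        exact fsymm a c
      · calc f a b = f a c := sh a b c hab hac
          _ = f c a := fsymm a c
          _ = f c d := sh c a d (Ne.symm hac) hcd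
  -- interpret values of `f`
  have interp0 : ∀ x y : V, (f x y = 0 ↔ (G.Adj x y ↔ G'.Adj x y)) := by
    intro x y
    by_cases h1 : G.Adj x y <;> by_cases h2 : G'.Adj x y <;>
      simp [hf, h1, h2] <;> decide
  have interp1 : ∀ x y : V, (f x y = 1 ↔ (G.Adj x y ↔ ¬ G'.Adj x y)) := by
    intro x y
    by_cases h1 : G.Adj x y <;> by_cases h2 : G'.Adj x y <;>
      simp [hf, h1, h2] <;> decide
  have dichot : ∀ u : ZMod 2, u = 0 ∨ u = 1 := by decide
  by_cases hex : ∃ p q : V, p ≠ q ∧ f p q = 1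
  · right
    obtain ⟨p, q, hpq, hpq1⟩ := hex
    ext x y
    by_cases hxy : x = y
    · subst hxy
      simp
    · have hfv : f x y = 1 := (key x y p q hxy hpq).trans hpq1
      have := (interp1 x y).mp hfv
      simp only [SimpleGraph.compl_adj]
      constructor
      · intro hG'
        exact ⟨hxy, fun hG => (this.mp hG) hG'⟩
      · rintro ⟨-, hG⟩
        by_contra hG'
        exact hG (this.mpr hG')
  · left
    push_neg at hex
    ext x y
    by_cases hxy : x = y
    · subst hxy
      simp
    · have hfv : f x y = 0 := by
        rcases dichot (f x y) with h0 | h1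
        · exact h0
        · exact absurd h1 (hex x y hxy)
      exact ((interp0 x y).mp hfv).symm
end
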